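/- Monotone decrease in an unmatched weight (Theorem 1, fourth condition): let m, n, l satisfy 1 ≤ l ≤ m, l ≤ n, 1 ≤ n, let λ_k > 0 for all k < l, ξ_k > 0 for all k < m, η_k > 0 for all k < n, and fix an index j with l ≤ j < m. If ξ' : Fin m → ℝ satisfies ξ'_k = ξ_k for all k ≠ j and ξ_j ≤ ξ'_j, then F(m, n, l, λ, ξ', η) ≤ F(m, n, l, λ, ξ, η): increasing the weight of a visual word that is not in any similar visual word pair does not increase the similarity. -/

import Mathlib

open Finset

/-- Extend a weight vector on `Fin m` to `ℕ`, zero outside. -/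
noncomputable def extW {m : ℕ} (ξ : Fin m → ℝ) (k : ℕ) : ℝ :=
  if h : k < m then ξ ⟨k, h⟩ else 0

/-- The image similarity measurement of Zhang et al. (Eq. 2). -/
noncomputable def F (m n l : ℕ) (lam : Fin l → ℝ) (ξ : Fin m → ℝ) (η : Fin n → ℝ) : ℝ :=
  (∑ k : Fin l, lam k * extW ξ k * extW η k) /
    (Real.sqrt ((∑ k : Fin m, ξ k) * (∑ k : Fin n, η k)) *
      Real.sqrt ((∑ k : Fin l, (lam k) ^ 2 * extW ξ k * extW η k) +
        (∑ k ∈ Finset.Ico l m, extW ξ k) * (∑ k ∈ Finset.Ico l n, extW η k)))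

theorem F_antitone_unmatched_weight (m n l : ℕ) (hl : 1 ≤ l) (hlm : l ≤ m) (hln : l ≤ n)
    (hn : 1 ≤ n)
    (lam : Fin l → ℝ) (ξ ξ' : Fin m → ℝ) (η : Fin n → ℝ)
    (hlam : ∀ k, 0 < lam k) (hξ : ∀ k, 0 < ξ k) (hη : ∀ k, 0 < η k)
    (j : Fin m) (hj : l ≤ (j : ℕ))
    (hsame : ∀ k, k ≠ j → ξ' k = ξ k) (hjle : ξ j ≤ ξ' j) :
    F m n l lam ξ' η ≤ F m n l lam ξ η := by
  have hξle : ∀ k, ξ k ≤ ξ' k := by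
    intro k
    by_cases hk : k = j
    · subst hk; exact hjle
    · rw [hsame k hk]
  -- extW agrees below l
  have hlow : ∀ k : Fin l, extW ξ' (k : ℕ) = extW ξ (k : ℕ) := by
    intro k
    have hkm : (k : ℕ) < m := lt_of_lt_of_le k.2 hlm
    simp only [extW, dif_pos hkm]
    apply hsame
    intro h
    have : (k : ℕ) = (j : ℕ) := congrArg Fin.val h
    omega
  have hext : ∀ k : ℕ, extW ξ k ≤ extW ξ' k := by
    intro k
    by_cases hk : k < m
    · simp only [extW, dif_pos hk]; exact hξle _
    · simp [extW, dif_neg hk]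
  have hextpos : ∀ k : ℕ, 0 ≤ extW ξ k := by
    intro k
    by_cases hk : k < m
    · simp only [extW, dif_pos hk]; exact (hξ _).le
    · simp [extW, dif_neg hk]
  have hextηpos : ∀ k : ℕ, 0 ≤ extW η k := by
    intro k
    by_cases hk : k < n
    · simp only [extW, dif_pos hk]; exact (hη _).le
    · simp [extW, dif_neg hk]
  unfold F
  rw [show (∑ k : Fin l, lam k * extW ξ' k * extW η k)
        = ∑ k : Fin l, lam k * extW ξ k * extW η k from
      Finset.sum_congr rfl fun k _ => by rw [hlow k]]
  rw [show (∑ k : Fin l, (lam k) ^ 2 * extW ξ' k * extW η k)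
        = ∑ k : Fin l, (lam k) ^ 2 * extW ξ k * extW η k from
      Finset.sum_congr rfl fun k _ => by rw [hlow k]]
  have hA : (0:ℝ) ≤ ∑ k : Fin l, lam k * extW ξ k * extW η k := by
    apply Finset.sum_nonneg
    intro k _
    exact mul_nonneg (mul_nonneg (hlam k).le (hextpos _)) (hextηpos _)
  -- positivity of the smaller denominator pieces
  have hm : 1 ≤ m := le_trans hl hlm
  have hS : (0:ℝ) < ∑ k : Fin m, ξ k := by
    apply Finset.sum_pos (fun k _ => hξ k)
    exact Finset.univ_nonempty_iff.mpr ⟨⟨0, hm⟩⟩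
  have hT : (0:ℝ) < ∑ k : Fin n, η k := by
    apply Finset.sum_pos (fun k _ => hη k)
    exact Finset.univ_nonempty_iff.mpr ⟨⟨0, hn⟩⟩
  have hB : (0:ℝ) < ∑ k : Fin l, (lam k) ^ 2 * extW ξ k * extW η k := by
    apply Finset.sum_pos
    · intro k _
      have hkm : (k : ℕ) < m := lt_of_lt_of_le k.2 hlm
      have hkn : (k : ℕ) < n := lt_of_lt_of_le k.2 hln
      have h1 : 0 < extW ξ (k : ℕ) := by simp only [extW, dif_pos hkm]; exact hξ _
      have h2 : 0 < extW η (k : ℕ) := by simp only [extW, dif_pos hkn]; exact hη _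
      exact mul_pos (mul_pos (pow_pos (hlam k) 2) h1) h2
    · exact Finset.univ_nonempty_iff.mpr ⟨⟨0, hl⟩⟩
  have hU : (0:ℝ) ≤ ∑ k ∈ Finset.Ico l m, extW ξ k :=
    Finset.sum_nonneg fun k _ => hextpos k
  have hV : (0:ℝ) ≤ ∑ k ∈ Finset.Ico l n, extW η k :=
    Finset.sum_nonneg fun k _ => hextηpos k
  have hD2 : (0:ℝ) < (∑ k : Fin l, (lam k) ^ 2 * extW ξ k * extW η k) +
      (∑ k ∈ Finset.Ico l m, extW ξ k) * (∑ k ∈ Finset.Ico l n, extW η k) :=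
    lt_of_lt_of_le hB (le_add_of_nonneg_right (mul_nonneg hU hV))
  have hDpos : (0:ℝ) < Real.sqrt ((∑ k : Fin m, ξ k) * (∑ k : Fin n, η k)) *
      Real.sqrt ((∑ k : Fin l, (lam k) ^ 2 * extW ξ k * extW η k) +
        (∑ k ∈ Finset.Ico l m, extW ξ k) * (∑ k ∈ Finset.Ico l n, extW η k)) :=
    mul_pos (Real.sqrt_pos.mpr (mul_pos hS hT)) (Real.sqrt_pos.mpr hD2)
  -- denominator monotone
  have hSle : (∑ k : Fin m, ξ k) ≤ ∑ k : Fin m, ξ' k :=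
    Finset.sum_le_sum fun k _ => hξle k
  have hUle : (∑ k ∈ Finset.Ico l m, extW ξ k) ≤ ∑ k ∈ Finset.Ico l m, extW ξ' k :=
    Finset.sum_le_sum fun k _ => hext k
  have hDle : Real.sqrt ((∑ k : Fin m, ξ k) * (∑ k : Fin n, η k)) *
      Real.sqrt ((∑ k : Fin l, (lam k) ^ 2 * extW ξ k * extW η k) +
        (∑ k ∈ Finset.Ico l m, extW ξ k) * (∑ k ∈ Finset.Ico l n, extW η k))
      ≤ Real.sqrt ((∑ k : Fin m, ξ' k) * (∑ k : Fin n, η k)) *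
      Real.sqrt ((∑ k : Fin l, (lam k) ^ 2 * extW ξ k * extW η k) +
        (∑ k ∈ Finset.Ico l m, extW ξ' k) * (∑ k ∈ Finset.Ico l n, extW η k)) := by
    apply mul_le_mul
    · exact Real.sqrt_le_sqrt (mul_le_mul_of_nonneg_right hSle hT.le)
    · exact Real.sqrt_le_sqrt (add_le_add_right (mul_le_mul_of_nonneg_right hUle hV) _)
    · exact Real.sqrt_nonneg _
    · exact Real.sqrt_nonneg _
  exact div_le_div_of_nonneg_left hA hDpos hDle
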